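/- Let m ∈ 𝒪 with m ≠ 0. Then the index of U⁰[m] in U is [U : U⁰[m]] = N(m𝒪) · ∏_{𝔭 prime ideal, 𝔭 | m𝒪} (1 + N(𝔭)⁻¹). -/

import Mathlib

open Matrix

/-- The congruence subgroup `U⁰[m] = {(a b; c d) ∈ U : b ∈ m𝒪}` of the unimodular group
`U = GL₂(𝒪)`. -/
def U0 {O : Type*} [CommRing O] (m : O) : Subgroup (GL (Fin 2) O) where
  carrier := {g | (g : Matrix (Fin 2) (Fin 2) O) 0 1 ∈ Ideal.span {m}}
  one_mem' := by
    simp [Ideal.zero_mem, Matrix.one_apply]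
  mul_mem' := by
    intro g h hg hh
    have : ((g * h : GL (Fin 2) O) : Matrix (Fin 2) (Fin 2) O) 0 1 =
        (g : Matrix (Fin 2) (Fin 2) O) 0 0 * (h : Matrix (Fin 2) (Fin 2) O) 0 1 +
          (g : Matrix (Fin 2) (Fin 2) O) 0 1 * (h : Matrix (Fin 2) (Fin 2) O) 1 1 := by
      simp [Units.val_mul, Matrix.mul_apply, Fin.sum_univ_two]
    simp only [Set.mem_setOf_eq] at *
    rw [this]
    exact Ideal.add_mem _ (Ideal.mul_mem_left _ _ hh) (Ideal.mul_mem_right _ _ hg)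
  inv_mem' := by
    intro g hg
    simp only [Set.mem_setOf_eq] at *
    have h1 : ((g⁻¹ : GL (Fin 2) O) : Matrix (Fin 2) (Fin 2) O) =
        ((g : Matrix (Fin 2) (Fin 2) O))⁻¹ := Matrix.coe_units_inv g
    rw [h1, Matrix.inv_def, Matrix.adjugate_fin_two]
    simp only [Matrix.smul_apply, Matrix.cons_val', Matrix.cons_val_one, Matrix.head_cons,
      Matrix.cons_val_zero, Matrix.empty_val', Matrix.cons_val_fin_one, Matrix.head_fin_const,
      smul_eq_mul]
    exact Ideal.mul_mem_left _ _ (neg_mem hg)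

noncomputable section
namespace Stmt13Aux
open scoped Classical

variable {R S : Type*} [CommRing R] [CommRing S]

/-- Unimodular pairs. -/
def IsUni (v : R × R) : Prop := ∃ x y, x * v.1 + y * v.2 = 1

/-- The type of unimodular pairs. -/
def Uni (R : Type*) [CommRing R] : Type _ := {v : R × R // IsUni v}

/-- Unit-rescaling equivalence. -/
def uniSetoid (R : Type*) [CommRing R] : Setoid (Uni R) where
  r v w := ∃ u : Rˣ, w.val.1 = u * v.val.1 ∧ w.val.2 = u * v.val.2
  iseqv := by
    constructor
    · exact fun v => ⟨1, by simp, by simp⟩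
    · rintro v w ⟨u, h1, h2⟩
      exact ⟨u⁻¹, by rw [h1, Units.inv_mul_cancel_left], by rw [h2, Units.inv_mul_cancel_left]⟩
    · rintro a b c ⟨u, h1, h2⟩ ⟨u', h1', h2'⟩
      exact ⟨u' * u, by rw [h1', h1, Units.val_mul, mul_assoc],
        by rw [h2', h2, Units.val_mul, mul_assoc]⟩

/-- The projective line over a commutative ring. -/
def P1 (R : Type*) [CommRing R] : Type _ := Quotient (uniSetoid R)

lemma p1_sound {v w : Uni R} (u : Rˣ) (h1 : w.val.1 = u * v.val.1)
    (h2 : w.val.2 = u * v.val.2) : (⟦v⟧ : P1 R) = ⟦w⟧ :=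
  Quotient.sound ⟨u, h1, h2⟩

lemma inv_mul_scale {u : Rˣ} {a : R} (b : R) (ha : IsUnit a) :
    Ring.inverse ((u : R) * a) * ((u : R) * b) = Ring.inverse a * b := by
  have h' : IsUnit ((u : R) * a) := (Units.isUnit_units_mul u a).mpr ha
  apply h'.mul_left_cancel
  rw [Ring.mul_inverse_cancel_left _ _ h', mul_assoc ((u : R)) a _,
    Ring.mul_inverse_cancel_left _ _ ha]

section Local

variable (M : Ideal R) (hM : ∀ x : R, IsUnit x ↔ x ∉ M)
include hM

lemma isUni_unit_right {v : R × R} (hv : IsUni v) (h1 : ¬ IsUnit v.1) : IsUnit v.2 := by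
  by_contra h2
  obtain ⟨x, y, hxy⟩ := hv
  have h1' : v.1 ∈ M := ((hM v.1).not_left).mp h1
  have h2' : v.2 ∈ M := ((hM v.2).not_left).mp h2
  have : (1 : R) ∈ M := hxy ▸ M.add_mem (M.mul_mem_left x h1') (M.mul_mem_left y h2')
  exact (hM 1).mp isUnit_one this

/-- The classifying function for the local case. -/
def locF (v : Uni R) : R ⊕ M :=
  if h : IsUnit v.val.1 then Sum.inl (Ring.inverse v.val.1 * v.val.2)
  else Sum.inr ⟨Ring.inverse v.val.2 * v.val.1,
    M.mul_mem_left _ (((hM v.val.1).not_left).mp h)⟩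

lemma locF_resp : ∀ v w : Uni R, (uniSetoid R).r v w → locF M hM v = locF M hM w := by
  rintro v w ⟨u, h1, h2⟩
  by_cases h : IsUnit v.val.1
  · have hw : IsUnit w.val.1 := h1 ▸ (Units.isUnit_units_mul u _).mpr h
    rw [locF, locF, dif_pos h, dif_pos hw]
    rw [h1, h2, inv_mul_scale _ h]
  · have hw : ¬ IsUnit w.val.1 := fun hc => h ((Units.isUnit_units_mul u _).mp (h1 ▸ hc))
    have h2u : IsUnit v.val.2 := isUni_unit_right M hM v.prop h
    rw [locF, locF, dif_neg h, dif_neg hw]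
    congr 1
    refine Subtype.ext ?_
    show Ring.inverse v.val.2 * v.val.1 = Ring.inverse w.val.2 * w.val.1
    rw [h1, h2, inv_mul_scale _ h2u]

/-- local case : `P1 R ≃ R ⊕ M` when nonunits are exactly `M`. -/
def p1EquivLocal : P1 R ≃ (R ⊕ M) where
  toFun := Quotient.lift (locF M hM) (locF_resp M hM)
  invFun := fun x => match x with
    | Sum.inl t => ⟦⟨(1, t), ⟨1, 0, by ring⟩⟩⟧
    | Sum.inr s => ⟦⟨(s.val, 1), ⟨0, 1, by ring⟩⟩⟧
  left_inv := by
    refine fun q => Quotient.inductionOn q (fun v => ?_)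
    show _ = (⟦v⟧ : P1 R)
    by_cases h : IsUnit v.val.1
    · rw [Quotient.lift_mk, locF, dif_pos h]
      exact p1_sound h.unit (by simp [h.unit_spec]) (by
        simp only [h.unit_spec]
        rw [Ring.mul_inverse_cancel_left _ _ h])
    · have h2u : IsUnit v.val.2 := isUni_unit_right M hM v.prop h
      rw [Quotient.lift_mk, locF, dif_neg h]
      exact p1_sound h2u.unit (by
          simp only [h2u.unit_spec]
          rw [Ring.mul_inverse_cancel_left _ _ h2u])
        (by simp [h2u.unit_spec])
  right_inv := by
    rintro (t | ⟨s, hs⟩)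
    · refine (Quotient.lift_mk _ _ _).trans ?_
      simp only [locF, dif_pos isUnit_one]
      simp [Ring.inverse_one]
    · have hns : ¬ IsUnit s := fun hc => (hM s).mp hc hs
      refine (Quotient.lift_mk _ _ _).trans ?_
      simp only [locF]
      simp only [dif_neg hns]
      exact congrArg Sum.inr (Subtype.ext (by simp [Ring.inverse_one]))

lemma card_p1_local [Finite R] : Nat.card (P1 R) = Nat.card R + Nat.card M := by
  have : Finite (M : Type _) := Subtype.finite
  rw [Nat.card_congr (p1EquivLocal M hM), Nat.card_sum]

end Local


lemma IsUni.map (e : R →+* S) {v : R × R} (hv : IsUni v) : IsUni (e v.1, e v.2) := by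
  obtain ⟨x, y, h⟩ := hv
  exact ⟨e x, e y, by simpa [← _root_.map_mul, ← _root_.map_add] using congrArg e h⟩

/-- `P1` is functorial under ring isomorphism. -/
noncomputable def p1CongrRing (e : R ≃+* S) : P1 R ≃ P1 S := by
  refine Equiv.ofBijective
    (Quotient.lift (fun v : Uni R => (⟦⟨(e v.val.1, e v.val.2), v.prop.map e.toRingHom⟩⟧ : P1 S))
      ?_) ⟨?_, ?_⟩
  · rintro v w ⟨u, h1, h2⟩
    exact p1_sound (Units.map e.toMonoidHom u)
      (by simp only [h1]; simp) (by simp only [h2]; simp)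
  · refine fun q q' => Quotient.inductionOn₂ q q' (fun v w h => ?_)
    obtain ⟨u, h1, h2⟩ := Quotient.exact h
    refine Quotient.sound ⟨Units.map e.symm.toMonoidHom u, ?_, ?_⟩
    · have := congrArg e.symm h1; simpa using this
    · have := congrArg e.symm h2; simpa using this
  · refine fun q => Quotient.inductionOn q (fun w => ?_)
    refine ⟨⟦⟨(e.symm w.val.1, e.symm w.val.2), w.prop.map e.symm.toRingHom⟩⟧, ?_⟩
    refine (Quotient.lift_mk _ _ _).trans ?_
    refine congrArg _ (Subtype.ext ?_)
    show (e (e.symm w.val.1), e (e.symm w.val.2)) = w.val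
    simp

/-- `P1` of a finite product of rings. -/
noncomputable def p1CongrPi {ι : Type*} [Fintype ι] (A : ι → Type*) [∀ i, CommRing (A i)] :
    P1 (∀ i, A i) ≃ ∀ i, P1 (A i) := by
  classical
  refine Equiv.ofBijective
    (Quotient.lift (fun v : Uni (∀ i, A i) => fun i =>
      (⟦⟨(v.val.1 i, v.val.2 i), by
          obtain ⟨x, y, h⟩ := v.prop
          exact ⟨x i, y i, congrFun h i⟩⟩⟧ : P1 (A i))) ?_) ⟨?_, ?_⟩
  · rintro v w ⟨u, h1, h2⟩
    refine funext fun i => ?_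
    refine p1_sound ⟨u.val i, u.inv i, by have := congrFun u.val_inv i; simpa using this,
      by have := congrFun u.inv_val i; simpa using this⟩ ?_ ?_
    · exact congrFun h1 i
    · exact congrFun h2 i
  · refine fun q q' => Quotient.inductionOn₂ q q' (fun v w h => ?_)
    have h' : ∀ i, ∃ u : (A i)ˣ, w.val.1 i = u * v.val.1 i ∧ w.val.2 i = u * v.val.2 i := by
      intro i
      have := congrFun h i
      exact Quotient.exact this
    choose u hu1 hu2 using h'
    refine Quotient.sound ⟨⟨fun i => ↑(u i), fun i => ↑(u i)⁻¹, funext fun i => by simp,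
      funext fun i => by simp⟩, funext hu1, funext hu2⟩
  · intro F
    have hsec : ∀ i, ∃ w : Uni (A i), ⟦w⟧ = F i := fun i => Quotient.exists_rep (F i)
    choose w hw using hsec
    have huni : IsUni (fun i => (w i).val.1, fun i => (w i).val.2) := by
      have : ∀ i, ∃ x y, x * (w i).val.1 + y * (w i).val.2 = 1 := fun i => (w i).prop
      choose x y hxy using this
      exact ⟨x, y, funext hxy⟩
    refine ⟨⟦⟨_, huni⟩⟧, ?_⟩
    refine (Quotient.lift_mk _ _ _).trans ?_
    refine funext fun i => ?_
    rw [← hw i]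
    exact congrArg _ (Subtype.ext rfl)


section Quot

variable {O : Type*} [CommRing O] [IsDomain O] [IsDedekindDomain O]

lemma isUnit_quotPow_iff {p : Ideal O} (hp : p.IsPrime) (hpb : p ≠ ⊥) {e : ℕ} (he : e ≠ 0)
    (x : O ⧸ p ^ e) : IsUnit x ↔ x ∉ p.map (Ideal.Quotient.mk (p ^ e)) := by
  obtain ⟨a, rfl⟩ := Ideal.Quotient.mk_surjective x
  constructor
  · intro hx hmem
    have htop : p.map (Ideal.Quotient.mk (p ^ e)) = ⊤ := Ideal.eq_top_of_isUnit_mem _ hmem hx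
    have h1 : (1 : O ⧸ p ^ e) ∈ p.map (Ideal.Quotient.mk (p ^ e)) := htop ▸ Submodule.mem_top
    obtain ⟨b, hb, hb1⟩ := Ideal.mem_map_iff_of_surjective _ Ideal.Quotient.mk_surjective |>.mp h1
    have : (1 : O) - b ∈ p ^ e := by
      rw [← Ideal.Quotient.mk_eq_mk_iff_sub_mem, hb1, _root_.map_one]
    have h1p : (1 : O) ∈ p := by
      have := Ideal.pow_le_self he this
      simpa using p.add_mem this hb
    exact hp.ne_top ((Ideal.eq_top_iff_one p).mpr h1p)
  · intro hmem
    have hap : a ∉ p := by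
      intro hap
      exact hmem (Ideal.mem_map_of_mem _ hap)
    have htop : Ideal.span {a} ⊔ p ^ e = ⊤ := by
      by_contra hne
      obtain ⟨M, hMmax, hMle⟩ := Ideal.exists_le_maximal _ hne
      have hpM : p ≤ M := hMmax.isPrime.le_of_pow_le (le_trans le_sup_right hMle)
      have hMp : M = p := ((Ideal.IsPrime.isMaximal hp hpb).eq_of_le hMmax.ne_top hpM).symm
      refine hap (hMp ▸ hMle ?_)
      exact le_sup_left (a := Ideal.span {a}) (Ideal.subset_span rfl)
    obtain ⟨y, hy, z, hz, hyz⟩ := Submodule.mem_sup.mp ((Ideal.eq_top_iff_one _).mp htop)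
    obtain ⟨c, hc⟩ := Ideal.mem_span_singleton'.mp hy
    refine IsUnit.of_mul_eq_one (Ideal.Quotient.mk _ c) ?_
    have hz0 : Ideal.Quotient.mk (p ^ e) z = 0 := Ideal.Quotient.eq_zero_iff_mem.mpr hz
    have h' : c * a + z = 1 := by rw [hc]; exact hyz
    have h'' : Ideal.Quotient.mk (p ^ e) (c * a + z) = 1 := by rw [h', _root_.map_one]
    rw [_root_.map_add, hz0, add_zero, _root_.map_mul] at h''
    rw [mul_comm]
    exact h''

lemma factor_surjective {I J : Ideal O} (h : I ≤ J) :
    Function.Surjective (Ideal.Quotient.factor h) := by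
  intro y; obtain ⟨a, rfl⟩ := Ideal.Quotient.mk_surjective y
  exact ⟨Ideal.Quotient.mk I a, Ideal.Quotient.factor_mk _ _⟩

lemma card_quot_pow_eq {p : Ideal O} {e : ℕ} (he : e ≠ 0) :
    Nat.card (O ⧸ p ^ e) =
      Nat.card (O ⧸ p) * Nat.card (p.map (Ideal.Quotient.mk (p ^ e))) := by
  have hle : p ^ e ≤ p := Ideal.pow_le_self he
  set φ : (O ⧸ p ^ e) →+* O ⧸ p := Ideal.Quotient.factor hle with hφ
  have hsurj : Function.Surjective φ := factor_surjective hle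
  set ψ : (O ⧸ p ^ e) →+ O ⧸ p := φ.toAddMonoidHom with hψ
  have hcard := AddSubgroup.card_eq_card_quotient_mul_card_addSubgroup ψ.ker
  have e1 : Nat.card ((O ⧸ p ^ e) ⧸ ψ.ker) = Nat.card (O ⧸ p) :=
    Nat.card_congr (QuotientAddGroup.quotientKerEquivOfSurjective ψ hsurj).toEquiv
  have e2 : Nat.card ψ.ker = Nat.card (p.map (Ideal.Quotient.mk (p ^ e))) := by
    refine Nat.card_congr (Equiv.subtypeEquivRight ?_)
    intro x
    obtain ⟨a, rfl⟩ := Ideal.Quotient.mk_surjective x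
    have hker : Ideal.Quotient.mk (p ^ e) a ∈ ψ.ker ↔ a ∈ p := by
      rw [AddMonoidHom.mem_ker]
      show φ (Ideal.Quotient.mk (p ^ e) a) = 0 ↔ _
      rw [hφ, Ideal.Quotient.factor_mk, Ideal.Quotient.eq_zero_iff_mem]
    rw [hker]
    constructor
    · intro hap
      exact Ideal.mem_map_of_mem _ hap
    · intro hmem
      obtain ⟨b, hb, hba⟩ :=
        (Ideal.mem_map_iff_of_surjective _ Ideal.Quotient.mk_surjective).mp hmem
      have : b - a ∈ p ^ e := by rwa [← Ideal.Quotient.mk_eq_mk_iff_sub_mem]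
      have : b - a ∈ p := hle this
      simpa using p.sub_mem hb this
  rw [hcard, e1, e2]

lemma finite_quot (hnf : ∀ x : O, x ≠ 0 → Finite (O ⧸ Ideal.span {x}))
    {J : Ideal O} (hJ : J ≠ ⊥) : Finite (O ⧸ J) := by
  obtain ⟨x, hxJ, hx0⟩ := Submodule.exists_mem_ne_zero_of_ne_bot hJ
  haveI := hnf x hx0
  have hle : Ideal.span {x} ≤ J := by rwa [Ideal.span_le, Set.singleton_subset_iff]
  exact Finite.of_surjective _ (factor_surjective hle)

open UniqueFactorizationMonoid in
lemma exists_unimodular_lift (a b m : O) (h : Ideal.span {a, b, m} = ⊤) :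
    ∃ a' b' : O, a' - a ∈ Ideal.span {m} ∧ b' - b ∈ Ideal.span {m} ∧
      Ideal.span {a', b'} = ⊤ := by
  classical
  by_cases ha : a = 0
  · subst ha
    refine ⟨m, b, by simpa using Ideal.mem_span_singleton_self m, by simp, ?_⟩
    have h' : Ideal.span ({b, m} : Set O) = ⊤ := by
      have h0 : Ideal.span ({0, b, m} : Set O) = Ideal.span ({b, m} : Set O) := by
        show Submodule.span O (insert 0 {b, m}) = Submodule.span O {b, m}
        exact Submodule.span_insert_zero
      rwa [h0] at h
    rwa [Ideal.span_pair_comm]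
  · set I := Ideal.span {a} with hIdef
    have hI : I ≠ ⊥ := by
      rw [hIdef, ne_eq, Ideal.span_singleton_eq_bot]; exact ha
    set s := (normalizedFactors I).toFinset with hs
    have hQ : ∀ q ∈ s, ∃ c : O, b + m * c ∉ q := by
      intro q hq
      have hqn : q ∈ normalizedFactors I := Multiset.mem_toFinset.mp hq
      have hprime : q.IsPrime := ((Ideal.mem_normalizedFactors_iff hI).mp hqn).1
      have hIq : I ≤ q := ((Ideal.mem_normalizedFactors_iff hI).mp hqn).2
      have haq : a ∈ q := hIq (Ideal.subset_span rfl)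
      by_cases hmq : m ∈ q
      · refine ⟨0, fun hbq => ?_⟩
        have hbq' : b ∈ q := by simpa using hbq
        have hle : Ideal.span {a, b, m} ≤ q := by
          rw [Ideal.span_le]
          intro x hx
          simp only [Set.mem_insert_iff, Set.mem_singleton_iff] at hx
          rcases hx with rfl | rfl | rfl
          exacts [haq, hbq', hmq]
        rw [h] at hle
        exact hprime.ne_top (top_le_iff.mp hle)
      · have hq0 : q ≠ ⊥ := by
          have := prime_of_normalized_factor q hqn
          simpa using this.ne_zero
        haveI hmax : q.IsMaximal := Ideal.IsPrime.isMaximal hprime hq0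
        letI : Field (O ⧸ q) := Ideal.Quotient.field q
        have hm0 : Ideal.Quotient.mk q m ≠ 0 :=
          fun h0 => hmq (Ideal.Quotient.eq_zero_iff_mem.mp h0)
        obtain ⟨c, hc⟩ :=
          Ideal.Quotient.mk_surjective ((Ideal.Quotient.mk q m)⁻¹ * (1 - Ideal.Quotient.mk q b))
        refine ⟨c, fun hmem => ?_⟩
        have h1 : Ideal.Quotient.mk q (b + m * c) = 1 := by
          rw [_root_.map_add, _root_.map_mul, hc, ← mul_assoc, mul_inv_cancel₀ hm0, one_mul]
          ring
        rw [Ideal.Quotient.eq_zero_iff_mem.mpr hmem] at h1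
        exact zero_ne_one h1
    choose c hc using hQ
    obtain ⟨t, ht⟩ := IsDedekindDomain.exists_forall_sub_mem_ideal (s := s) id (fun _ => 1)
      (fun q hq => prime_of_normalized_factor q (Multiset.mem_toFinset.mp hq))
      (fun i _ j _ hij => hij) (fun q => c q.val q.prop)
    refine ⟨a, b + m * t, by simp, Ideal.mem_span_singleton'.mpr ⟨t, by ring⟩, ?_⟩
    by_contra hne
    obtain ⟨M, hMmax, hMle⟩ := Ideal.exists_le_maximal _ hne
    have haM : a ∈ M := hMle (Ideal.subset_span (by simp))
    have hbM : b + m * t ∈ M := hMle (Ideal.subset_span (by simp))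
    have hIM : I ≤ M := by
      rw [hIdef, Ideal.span_le, Set.singleton_subset_iff]; exact haM
    have hMs : M ∈ s :=
      Multiset.mem_toFinset.mpr ((Ideal.mem_normalizedFactors_iff hI).mpr ⟨hMmax.isPrime, hIM⟩)
    have hsub : t - c M hMs ∈ M := by
      have := ht M hMs
      simpa using this
    have hbc : b + m * c M hMs ∈ M := by
      have h2 : b + m * c M hMs = (b + m * t) - m * (t - c M hMs) := by ring
      rw [h2]
      exact M.sub_mem hbM (M.mul_mem_left m hsub)
    exact hc M hMs hbc

end Quot

section GL2
variable {O : Type*} [CommRing O] (m : O)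

lemma mem_U0_iff {g : GL (Fin 2) O} :
    g ∈ U0 m ↔ (g : Matrix (Fin 2) (Fin 2) O) 0 1 ∈ Ideal.span {m} := Iff.rfl

/-- reduction of (the matrix of) an element of `GL₂(O)` modulo `m`. -/
def rho (g : GL (Fin 2) O) : Matrix (Fin 2) (Fin 2) (O ⧸ Ideal.span {m}) :=
  ((g : Matrix (Fin 2) (Fin 2) O)).map (Ideal.Quotient.mk (Ideal.span {m}))

lemma rho_apply (g : GL (Fin 2) O) (i j : Fin 2) :
    rho m g i j = Ideal.Quotient.mk (Ideal.span {m}) ((g : Matrix (Fin 2) (Fin 2) O) i j) := rfl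

lemma rho_mul (g h : GL (Fin 2) O) : rho m (g * h) = rho m g * rho m h := by
  unfold rho
  rw [show ((g * h : GL (Fin 2) O) : Matrix (Fin 2) (Fin 2) O)
      = (g : Matrix (Fin 2) (Fin 2) O) * (h : Matrix (Fin 2) (Fin 2) O) from Units.val_mul g h,
    Matrix.map_mul]

lemma rho_one : rho m (1 : GL (Fin 2) O) = 1 := by
  unfold rho
  rw [show ((1 : GL (Fin 2) O) : Matrix (Fin 2) (Fin 2) O) = 1 from rfl]
  exact Matrix.map_one _ (_root_.map_zero _) (_root_.map_one _)

lemma rho_inv_mul (g : GL (Fin 2) O) : rho m g⁻¹ * rho m g = 1 := by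
  rw [← rho_mul, inv_mul_cancel, rho_one]

lemma rho_mul_inv (g : GL (Fin 2) O) : rho m g * rho m g⁻¹ = 1 := by
  rw [← rho_mul, mul_inv_cancel, rho_one]

lemma fUni (g : GL (Fin 2) O) : IsUni (rho m g⁻¹ 0 0, rho m g⁻¹ 0 1) := by
  refine ⟨rho m g 0 0, rho m g 1 0, ?_⟩
  have h := congrFun (congrFun (rho_inv_mul m g) 0) 0
  rw [Matrix.mul_apply, Fin.sum_univ_two] at h
  rw [Matrix.one_apply_eq] at h
  rw [mul_comm (rho m g 0 0) _, mul_comm (rho m g 1 0) _]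
  exact h

/-- image of `g` in the projective line over `O/m`: class of the first row of `g⁻¹` mod `m`. -/
def fG (g : GL (Fin 2) O) : P1 (O ⧸ Ideal.span {m}) :=
  ⟦⟨(rho m g⁻¹ 0 0, rho m g⁻¹ 0 1), fUni m g⟩⟧

lemma fG_eq_of_rel (g h : GL (Fin 2) O) (hrel : g⁻¹ * h ∈ U0 m) : fG m g = fG m h := by
  set k : GL (Fin 2) O := g⁻¹ * h with hk
  have hkinv : k⁻¹ ∈ U0 m := (U0 m).inv_mem hrel
  have hhinv : h⁻¹ = k⁻¹ * g⁻¹ := by rw [hk]; group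
  have hK01 : rho m k⁻¹ 0 1 = 0 := by
    rw [rho_apply, Ideal.Quotient.eq_zero_iff_mem]
    exact hkinv
  -- `K 0 0` is a unit
  have hdet1 : ((k⁻¹ : GL (Fin 2) O) : Matrix (Fin 2) (Fin 2) O) * (k : Matrix (Fin 2) (Fin 2) O) = 1 := by
    rw [← Units.val_mul, inv_mul_cancel, Units.val_one]
  have hdetu : IsUnit (((k⁻¹ : GL (Fin 2) O) : Matrix (Fin 2) (Fin 2) O).det) :=
    IsUnit.of_mul_eq_one _ (by rw [← Matrix.det_mul, hdet1, Matrix.det_one])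
  have hdetmk : IsUnit (rho m k⁻¹ 0 0 * rho m k⁻¹ 1 1) := by
    have h1 : Ideal.Quotient.mk (Ideal.span {m}) (((k⁻¹ : GL (Fin 2) O) : Matrix (Fin 2) (Fin 2) O).det)
        = rho m k⁻¹ 0 0 * rho m k⁻¹ 1 1 - rho m k⁻¹ 0 1 * rho m k⁻¹ 1 0 := by
      rw [Matrix.det_fin_two, _root_.map_sub, _root_.map_mul, _root_.map_mul]
      rfl
    have h2 := hdetu.map (Ideal.Quotient.mk (Ideal.span {m}))
    rw [h1, hK01, zero_mul, sub_zero] at h2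
    exact h2
  have hu : IsUnit (rho m k⁻¹ 0 0) := isUnit_of_mul_isUnit_left hdetmk
  refine p1_sound hu.unit ?_ ?_ <;>
  · show rho m h⁻¹ 0 _ = _
    rw [hhinv, rho_mul, Matrix.mul_apply, Fin.sum_univ_two, hK01, zero_mul, add_zero,
      hu.unit_spec]

lemma rel_of_fG_eq (g h : GL (Fin 2) O) (heq : fG m g = fG m h) : g⁻¹ * h ∈ U0 m := by
  obtain ⟨u, h1, h2⟩ := Quotient.exact heq
  rw [mem_U0_iff, ← Ideal.Quotient.eq_zero_iff_mem]
  have hcoe : ((g⁻¹ * h : GL (Fin 2) O) : Matrix (Fin 2) (Fin 2) O)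
      = ((g⁻¹ : GL (Fin 2) O) : Matrix (Fin 2) (Fin 2) O) * (h : Matrix (Fin 2) (Fin 2) O) := Units.val_mul _ _
  have hmain : (rho m g⁻¹ * rho m h) 0 1 = 0 := by
    refine (Units.mul_right_eq_zero u).mp ?_
    have hones := congrFun (congrFun (rho_inv_mul m h) 0) 1
    rw [Matrix.mul_apply, Fin.sum_univ_two] at hones
    rw [Matrix.one_apply_ne (by decide)] at hones
    rw [Matrix.mul_apply, Fin.sum_univ_two]
    calc (u : O ⧸ Ideal.span {m}) * (rho m g⁻¹ 0 0 * rho m h 0 1 + rho m g⁻¹ 0 1 * rho m h 1 1)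
        = (↑u * rho m g⁻¹ 0 0) * rho m h 0 1 + (↑u * rho m g⁻¹ 0 1) * rho m h 1 1 := by ring
      _ = rho m h⁻¹ 0 0 * rho m h 0 1 + rho m h⁻¹ 0 1 * rho m h 1 1 := by rw [← h1, ← h2]
      _ = 0 := hones
  show Ideal.Quotient.mk (Ideal.span {m})
      (((g⁻¹ * h : GL (Fin 2) O) : Matrix (Fin 2) (Fin 2) O) 0 1) = 0
  rw [hcoe]
  have : Ideal.Quotient.mk (Ideal.span {m})
      ((((g⁻¹ : GL (Fin 2) O) : Matrix (Fin 2) (Fin 2) O) * (h : Matrix (Fin 2) (Fin 2) O)) 0 1)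
      = (rho m g⁻¹ * rho m h) 0 1 := by
    rw [Matrix.mul_apply, Fin.sum_univ_two, _root_.map_add, _root_.map_mul, _root_.map_mul,
      Matrix.mul_apply, Fin.sum_univ_two]
    rfl
  rw [this, hmain]

end GL2

section GLDedekind
variable {O : Type*} [CommRing O] [IsDomain O] [IsDedekindDomain O] (m : O)

lemma fG_surjective : Function.Surjective (fG m : GL (Fin 2) O → P1 (O ⧸ Ideal.span {m})) := by
  intro q
  refine Quotient.inductionOn q (fun v => ?_)
  obtain ⟨a, ha⟩ := Ideal.Quotient.mk_surjective v.val.1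
  obtain ⟨b, hb⟩ := Ideal.Quotient.mk_surjective v.val.2
  obtain ⟨xx, yy, hxy⟩ := v.prop
  obtain ⟨x, hx⟩ := Ideal.Quotient.mk_surjective xx
  obtain ⟨y, hy⟩ := Ideal.Quotient.mk_surjective yy
  have hone : Ideal.Quotient.mk (Ideal.span {m}) (x * a + y * b) = 1 := by
    rw [_root_.map_add, _root_.map_mul, _root_.map_mul, hx, hy, ha, hb, hxy]
  have hmem1 : x * a + y * b - 1 ∈ Ideal.span {m} := by
    rw [← Ideal.Quotient.eq_zero_iff_mem, _root_.map_sub, hone, _root_.map_one, sub_self]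
  have htop : Ideal.span ({a, b, m} : Set O) = ⊤ := by
    rw [Ideal.eq_top_iff_one]
    have hma : a ∈ Ideal.span ({a, b, m} : Set O) := Ideal.subset_span (by simp)
    have hmb : b ∈ Ideal.span ({a, b, m} : Set O) := Ideal.subset_span (by simp)
    have hmm : Ideal.span ({m} : Set O) ≤ Ideal.span ({a, b, m} : Set O) :=
      Ideal.span_mono (by simp)
    have h1 : (1 : O) = (x * a + y * b) - (x * a + y * b - 1) := by ring
    rw [h1]
    exact Ideal.sub_mem _
      (Ideal.add_mem _ (Ideal.mul_mem_left _ _ hma) (Ideal.mul_mem_left _ _ hmb)) (hmm hmem1)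
  obtain ⟨a', b', ha', hb', htop'⟩ := exists_unimodular_lift a b m htop
  obtain ⟨c, d, hcd⟩ := Ideal.mem_span_pair.mp ((Ideal.eq_top_iff_one _).mp htop')
  have hdet : IsUnit (!![a', b'; -d, c] : Matrix (Fin 2) (Fin 2) O).det := by
    rw [Matrix.det_fin_two_of]
    have h2 : a' * c - b' * -d = 1 := by linear_combination hcd
    rw [h2]; exact isUnit_one
  obtain ⟨w, hw⟩ := (Matrix.isUnit_iff_isUnit_det _).mpr hdet
  refine ⟨(w⁻¹ : GL (Fin 2) O), ?_⟩
  have hmat : (((w⁻¹ : GL (Fin 2) O))⁻¹ : GL (Fin 2) O) = w := inv_inv w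
  have e1 : rho m ((w⁻¹ : GL (Fin 2) O))⁻¹ 0 0 = v.val.1 := by
    rw [rho_apply, hmat, hw]
    have : (!![a', b'; -d, c] : Matrix (Fin 2) (Fin 2) O) 0 0 = a' := by simp
    rw [this, (Ideal.Quotient.mk_eq_mk_iff_sub_mem a' a).mpr ha', ha]
  have e2 : rho m ((w⁻¹ : GL (Fin 2) O))⁻¹ 0 1 = v.val.2 := by
    rw [rho_apply, hmat, hw]
    have : (!![a', b'; -d, c] : Matrix (Fin 2) (Fin 2) O) 0 1 = b' := by simp
    rw [this, (Ideal.Quotient.mk_eq_mk_iff_sub_mem b' b).mpr hb', hb]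
  refine Quotient.sound ⟨1, ?_, ?_⟩
  · show v.val.1 = ↑(1 : (O ⧸ Ideal.span {m})ˣ) * rho m ((w⁻¹ : GL (Fin 2) O))⁻¹ 0 0
    rw [Units.val_one, one_mul]; exact e1.symm
  · show v.val.2 = ↑(1 : (O ⧸ Ideal.span {m})ˣ) * rho m ((w⁻¹ : GL (Fin 2) O))⁻¹ 0 1
    rw [Units.val_one, one_mul]; exact e2.symm

/-- The coset space of `U⁰[m]` is the projective line over `O/m`. -/
noncomputable def glEquiv : (GL (Fin 2) O ⧸ U0 m) ≃ P1 (O ⧸ Ideal.span {m}) :=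
  Equiv.ofBijective
    (Quotient.lift (fG m) (fun g h hr => fG_eq_of_rel m g h (QuotientGroup.leftRel_apply.mp hr)))
    ⟨fun q q' => Quotient.inductionOn₂ q q' (fun g h heq =>
        Quotient.sound (QuotientGroup.leftRel_apply.mpr (rel_of_fG_eq m g h heq))),
     fun x => by obtain ⟨g, hg⟩ := fG_surjective m x; exact ⟨⟦g⟧, hg⟩⟩

lemma index_eq : (U0 m).index = Nat.card (P1 (O ⧸ Ideal.span {m})) := by
  rw [Subgroup.index]
  exact Nat.card_congr (glEquiv m)

end GLDedekind
end Stmt13Aux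

open Stmt13Aux UniqueFactorizationMonoid
open scoped Classical

theorem stmt13 {O : Type*} [CommRing O] [IsDomain O] [IsDedekindDomain O]
    -- `𝒪` is norm-finite:
    (hnf : ∀ x : O, x ≠ 0 → Finite (O ⧸ Ideal.span {x}))
    (m : O) (hm : m ≠ 0) :
    ((U0 m).index : ℚ) =
      (Nat.card (O ⧸ Ideal.span {m}) : ℚ) *
        -- product over all prime ideals `𝔭` dividing `m𝒪`:
        ∏ᶠ (𝔭 : Ideal O) (_ : 𝔭.IsPrime ∧ Ideal.span {m} ≤ 𝔭),
          (1 + (Nat.card (O ⧸ 𝔭) : ℚ)⁻¹) := by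
  set I := Ideal.span ({m} : Set O) with hIdef
  have hI : I ≠ ⊥ := by rw [hIdef, ne_eq, Ideal.span_singleton_eq_bot]; exact hm
  haveI : Finite (O ⧸ I) := hnf m hm
  have hfn : factors I = normalizedFactors I := factors_eq_normalizedFactors I
  set s : Finset (Ideal O) := (factors I).toFinset with hsdef
  -- basic facts about each prime factor
  have hmem : ∀ P : Ideal O, P ∈ s ↔ P.IsPrime ∧ I ≤ P := by
    intro P
    rw [hsdef, Multiset.mem_toFinset, hfn, Ideal.mem_normalizedFactors_iff hI]
  have hPb : ∀ P ∈ s, P ≠ ⊥ := by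
    intro P hP h0
    have : m ∈ P := ((hmem P).mp hP).2 (Ideal.mem_span_singleton_self m)
    rw [h0, Ideal.mem_bot] at this
    exact hm this
  have heP : ∀ P ∈ s, Multiset.count P (factors I) ≠ 0 := by
    intro P hP
    exact (Multiset.count_pos.mpr (Multiset.mem_toFinset.mp hP)).ne'
  have Efac := IsDedekindDomain.quotientEquivPiFactors hI
  have hidx : ((U0 m).index : ℚ) =
      ∏ P : s, (Nat.card (P1 (O ⧸ (P : Ideal O) ^ Multiset.count (P : Ideal O) (factors I))) : ℚ) := by
    rw [index_eq m, Nat.card_congr ((p1CongrRing Efac).trans (p1CongrPi _)), Nat.card_pi]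
    push_cast
    rfl
  have hcardR : Nat.card (O ⧸ I) =
      ∏ P : s, Nat.card (O ⧸ (P : Ideal O) ^ Multiset.count (P : Ideal O) (factors I)) := by
    rw [Nat.card_congr Efac.toEquiv, Nat.card_pi]
  have hper : ∀ P : s, (Nat.card (P1 (O ⧸ (P : Ideal O) ^ Multiset.count (P : Ideal O) (factors I))) : ℚ)
      = (Nat.card (O ⧸ (P : Ideal O) ^ Multiset.count (P : Ideal O) (factors I)) : ℚ) *
        (1 + (Nat.card (O ⧸ (P : Ideal O)) : ℚ)⁻¹) := by
    rintro ⟨P, hP⟩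
    have hprime : P.IsPrime := ((hmem P).mp hP).1
    have hb : P ≠ ⊥ := hPb P hP
    have hecount : Multiset.count P (factors I) ≠ 0 := heP P hP
    have hpowb : P ^ Multiset.count P (factors I) ≠ ⊥ := by
      rw [← Ideal.zero_eq_bot] at hb ⊢
      exact pow_ne_zero _ hb
    haveI : Finite (O ⧸ P ^ Multiset.count P (factors I)) := finite_quot hnf hpowb
    haveI : Finite (O ⧸ P) := finite_quot hnf hb
    have hM := isUnit_quotPow_iff hprime hb hecount
    have h1 := card_p1_local _ hM
    have h2 := card_quot_pow_eq (O := O) (p := P) hecount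
    have hq0 : (Nat.card (O ⧸ P) : ℚ) ≠ 0 := Nat.cast_ne_zero.mpr Nat.card_pos.ne'
    rw [h1, h2]
    push_cast
    field_simp
  have hfin : (∏ᶠ (𝔭 : Ideal O) (_ : 𝔭.IsPrime ∧ I ≤ 𝔭), (1 + (Nat.card (O ⧸ 𝔭) : ℚ)⁻¹))
      = ∏ p ∈ s, (1 + (Nat.card (O ⧸ p) : ℚ)⁻¹) :=
    finprod_cond_eq_prod_of_cond_iff _ (fun {x} _ => (hmem x).symm)
  rw [hidx, hfin, Finset.prod_congr rfl (fun P _ => hper P), Finset.prod_mul_distrib]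
  congr 1
  · rw [hcardR]
    push_cast
    rfl
  · exact Finset.prod_coe_sort s (fun p => (1 + (Nat.card (O ⧸ p) : ℚ)⁻¹))
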